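/- Let M ≥ 0 and ζ ≤ M², and let ψ be the truncated quartic: ψ(U) = (3M²/2)U² + 2M³U + (3/4)M⁴ for U < −M, ψ(U) = (1/4)U⁴ for −M ≤ U ≤ M, and ψ(U) = (3M²/2)U² − 2M³U + (3/4)M⁴ for U > M. Then ψ(U) ≥ (ζ/2)U² − ζ²/4 for all U ∈ ℝ. -/
import Mathlib

/-- The truncated quartic potential `ψ` with parameter `M`. -/
noncomputable def psi (M U : ℝ) : ℝ :=
  if U < -M then 3 * M ^ 2 / 2 * U ^ 2 + 2 * M ^ 3 * U + 3 / 4 * M ^ 4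
  else if U ≤ M then 1 / 4 * U ^ 4
  else 3 * M ^ 2 / 2 * U ^ 2 - 2 * M ^ 3 * U + 3 / 4 * M ^ 4

/-- If `ζ ≤ M²`, the truncated quartic satisfies `ψ(U) ≥ (ζ/2)U² − ζ²/4`. -/
theorem psi_lower_bound (M ζ : ℝ) (hM : 0 ≤ M) (hζ : ζ ≤ M ^ 2) :
    ∀ U : ℝ, ζ / 2 * U ^ 2 - ζ ^ 2 / 4 ≤ psi M U := by
  intro U
  unfold psi
  split_ifs with h1 h2
  · have hU : 0 ≤ -M - U := by linarith
    have h3 : 0 ≤ 3 * M ^ 2 - ζ := by nlinarith [sq_nonneg M]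
    nlinarith [mul_nonneg h3 (sq_nonneg (U + M)), sq_nonneg (M ^ 2 - ζ),
      mul_nonneg (mul_nonneg hM (by linarith : (0:ℝ) ≤ M ^ 2 - ζ)) hU]
  · nlinarith [sq_nonneg (U ^ 2 - ζ)]
  · have hU : 0 ≤ U - M := by linarith
    have h3 : 0 ≤ 3 * M ^ 2 - ζ := by nlinarith [sq_nonneg M]
    nlinarith [mul_nonneg h3 (sq_nonneg (U - M)), sq_nonneg (M ^ 2 - ζ),
      mul_nonneg (mul_nonneg hM (by linarith : (0:ℝ) ≤ M ^ 2 - ζ)) hU]
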